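/- Let p be a prime and let X_1, ..., X_m be subsets of F_p such that Σ_{i=1}^m ⌈|X_i|^2 / 2⌉ < p. Then there exist elements t_1, ..., t_m ∈ F_p such that the translated sets X_1 + t_1, ..., X_m + t_m are pairwise disjoint. -/

import Mathlib

open MvPolynomial Finset

set_option linter.unusedSectionVars false

namespace PackingTranslates

variable {σ : Type*} [DecidableEq σ] {R : Type*} [CommRing R]

/-- `G` agrees with `T` in top degree `n`. -/
def TApx (n : ℕ) (G T : MvPolynomial σ R) : Prop :=
  G.totalDegree ≤ n ∧ T.totalDegree ≤ n ∧
    ∀ D ∈ (G - T).support, (D.sum fun _ e => e) < n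

lemma TApx.refl {n : ℕ} {T : MvPolynomial σ R} (h : T.totalDegree ≤ n) : TApx n T T := by
  refine ⟨h, h, ?_⟩; simp

lemma totalDegree_lt_of_support {n : ℕ} {P : MvPolynomial σ R} (hP : P ≠ 0)
    (h : ∀ D ∈ P.support, (D.sum fun _ e => e) < n) : P.totalDegree < n := by
  obtain ⟨D₀, hD₀⟩ := (MvPolynomial.support_nonempty.2 hP)
  have hn : 0 < n := lt_of_le_of_lt (Nat.zero_le _) (h D₀ hD₀)
  rw [MvPolynomial.totalDegree]
  exact Finset.sup_lt_iff hn |>.2 h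

lemma TApx.mul {n₁ n₂ : ℕ} {G₁ T₁ G₂ T₂ : MvPolynomial σ R}
    (h₁ : TApx n₁ G₁ T₁) (h₂ : TApx n₂ G₂ T₂) : TApx (n₁ + n₂) (G₁ * G₂) (T₁ * T₂) := by
  obtain ⟨hG₁, hT₁, hR₁⟩ := h₁
  obtain ⟨hG₂, hT₂, hR₂⟩ := h₂
  refine ⟨le_trans (totalDegree_mul _ _) (add_le_add hG₁ hG₂),
    le_trans (totalDegree_mul _ _) (add_le_add hT₁ hT₂), ?_⟩
  have key : G₁ * G₂ - T₁ * T₂ = (G₁ - T₁) * G₂ + T₁ * (G₂ - T₂) := by ring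
  intro D hD
  rw [key] at hD
  have hD' := MvPolynomial.support_add hD
  have hbound : ∀ (P Q : MvPolynomial σ R) (a b : ℕ),
      (∀ E ∈ P.support, (E.sum fun _ e => e) < a) → Q.totalDegree ≤ b →
      D ∈ (P * Q).support → (D.sum fun _ e => e) < a + b := by
    intro P Q a b hP hQ hDm
    by_cases hP0 : P = 0
    · simp [hP0] at hDm
    have h1 : (P * Q).totalDegree < a + b :=
      lt_of_le_of_lt (totalDegree_mul _ _)
        (Nat.add_lt_add_of_lt_of_le (totalDegree_lt_of_support hP0 hP) hQ)
    exact lt_of_le_of_lt (MvPolynomial.le_totalDegree hDm) h1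
  rcases Finset.mem_union.1 hD' with h | h
  · exact hbound _ _ n₁ n₂ hR₁ hG₂ h
  · -- D ∈ support (T₁ * (G₂ - T₂)) : symmetric
    have : D ∈ ((G₂ - T₂) * T₁).support := by rwa [mul_comm] at h
    have := hbound _ _ n₂ n₁ hR₂ hT₁ this
    omega

lemma TApx.prod {ι : Type*} (s : Finset ι) (n : ι → ℕ) (G T : ι → MvPolynomial σ R)
    (h : ∀ i ∈ s, TApx (n i) (G i) (T i)) :
    TApx (∑ i ∈ s, n i) (∏ i ∈ s, G i) (∏ i ∈ s, T i) := by
  induction s using Finset.cons_induction with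
  | empty =>
    refine ⟨by simp, by simp, by simp⟩
  | cons a s ha ih =>
    rw [Finset.prod_cons, Finset.prod_cons, Finset.sum_cons]
    exact (h a (Finset.mem_cons_self a s)).mul (ih fun i hi => h i (Finset.mem_cons_of_mem hi))

lemma TApx.linC {L : MvPolynomial σ R} (hL : L.totalDegree ≤ 1) (c : R) :
    TApx 1 (L + C c) L := by
  refine ⟨?_, hL, ?_⟩
  · exact le_trans (totalDegree_add _ _) (by simp [hL, totalDegree_C])
  · intro D hD
    have : L + C c - L = C c := by ring
    rw [this] at hD
    rw [MvPolynomial.mem_support_iff, MvPolynomial.coeff_C] at hD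
    rcases eq_or_ne (0 : σ →₀ ℕ) D with h0 | h0
    · subst h0; simp
    · simp [h0] at hD

lemma TApx.coeff_eq {n : ℕ} {G T : MvPolynomial σ R} (h : TApx n G T) {D : σ →₀ ℕ}
    (hD : (D.sum fun _ e => e) = n) : coeff D G = coeff D T := by
  obtain ⟨-, -, hR⟩ := h
  have : coeff D (G - T) = 0 := by
    by_contra hne
    have : D ∈ (G - T).support := by
      rwa [MvPolynomial.mem_support_iff]
    have := hR D this
    omega
  rw [MvPolynomial.coeff_sub, sub_eq_zero] at this
  exact this

end PackingTranslates

namespace PackingTranslates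

variable {p : ℕ} [Fact p.Prime]

lemma sum_pow_card_sub_one : ∑ x : ZMod p, x ^ (p - 1) = -1 := by
  have hp : 1 < p := (Fact.out : p.Prime).one_lt
  have h0 : p - 1 ≠ 0 := by omega
  have h1 : ∀ x : ZMod p, x ^ (p - 1) = 1 - if x = 0 then 1 else 0 := by
    intro x
    by_cases hx : x = 0
    · simp [hx, zero_pow h0]
    · simp [hx, ZMod.pow_card_sub_one_eq_one hx]
  rw [Finset.sum_congr rfl (fun x _ => h1 x), Finset.sum_sub_distrib]
  rw [Finset.sum_ite_eq' Finset.univ (0 : ZMod p) (fun _ => (1:ZMod p))]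
  simp only [Finset.mem_univ, if_true, Finset.sum_const, Finset.card_univ, ZMod.card, nsmul_eq_mul,
    mul_one]
  rw [ZMod.natCast_self]
  ring

/-- The CW-style main tool: a polynomial with a nonzero coefficient on a maximal-degree
monomial with exponents `≤ p - 1` has a nonzero value. -/
theorem exists_eval_ne {m : ℕ} (G : MvPolynomial (Fin m) (ZMod p)) (d : Fin m →₀ ℕ)
    (hd : ∀ i, d i ≤ p - 1) (hdeg : G.totalDegree ≤ ∑ i, d i) (hc : coeff d G ≠ 0) :
    ∃ t : Fin m → ZMod p, eval t G ≠ 0 := by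
  have hp : 1 < p := (Fact.out : p.Prime).one_lt
  by_contra hall
  push_neg at hall
  set cm : Fin m →₀ ℕ := ∑ i, Finsupp.single i (p - 1 - d i) with hcm
  have hcm_apply : ∀ j, cm j = p - 1 - d j := by
    intro j
    rw [hcm, Finsupp.finset_sum_apply]
    rw [Finset.sum_eq_single j (fun i _ hij => Finsupp.single_eq_of_ne' hij)
      (fun h => absurd (Finset.mem_univ j) h)]
    simp
  set G' : MvPolynomial (Fin m) (ZMod p) := (monomial cm 1) * G with hG'
  -- all evaluations of G' vanish
  have hall' : ∀ t : Fin m → ZMod p, eval t G' = 0 := by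
    intro t
    rw [hG', eval_mul, hall t, mul_zero]
  -- hence the full sum vanishes
  have hsum : ∑ t : Fin m → ZMod p, eval t G' = 0 := by
    simp [hall']
  -- compute the sum by monomials
  rw [Finset.sum_congr rfl (fun t _ => eval_eq' t G')] at hsum
  rw [Finset.sum_comm] at hsum
  have hswap : ∀ D : Fin m →₀ ℕ,
      ∑ t : Fin m → ZMod p, coeff D G' * ∏ i, t i ^ D i
        = coeff D G' * ∏ i, (∑ x : ZMod p, x ^ D i) := by
    intro D
    rw [← Finset.mul_sum]
    congr 1
    rw [Finset.prod_univ_sum (fun _ => (Finset.univ : Finset (ZMod p)))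
      (fun i x => x ^ D i)]
    rw [Fintype.piFinset_univ]
  rw [Finset.sum_congr rfl (fun D _ => hswap D)] at hsum
  -- target monomial
  set dfull : Fin m →₀ ℕ := d + cm with hdfull
  have hdfull_apply : ∀ j, dfull j = p - 1 := by
    intro j
    rw [hdfull, Finsupp.add_apply, hcm_apply]
    have := hd j
    omega
  -- each other monomial contributes 0
  have hzero : ∀ D ∈ G'.support, D ≠ dfull → coeff D G' * ∏ i, (∑ x : ZMod p, x ^ D i) = 0 := by
    intro D hD hne
    by_cases hlow : ∃ i, D i < p - 1
    · obtain ⟨i, hi⟩ := hlow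
      have : (∑ x : ZMod p, x ^ D i) = 0 := by
        have := FiniteField.sum_pow_lt_card_sub_one (ZMod p) (D i) (by rwa [ZMod.card])
        exact this
      rw [Finset.prod_eq_zero (Finset.mem_univ i) this, mul_zero]
    · push_neg at hlow
      exfalso
      apply hne
      -- all D i ≥ p - 1, and total degree forces equality
      have hsum_le : ∑ i, D i ≤ ∑ i : Fin m, (p - 1) := by
        have h1 : (D.sum fun _ e => e) ≤ G'.totalDegree := MvPolynomial.le_totalDegree hD
        have h2 : G'.totalDegree ≤ cm.sum (fun _ e => e) + G.totalDegree := by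
          rw [hG']
          refine le_trans (totalDegree_mul _ _) ?_
          gcongr
          exact totalDegree_monomial_le _ _
        have h3 : (D.sum fun _ e => e) = ∑ i, D i := Finsupp.sum_fintype _ _ (fun _ => rfl)
        have h4 : (cm.sum fun _ e => e) = ∑ i, cm i := Finsupp.sum_fintype _ _ (fun _ => rfl)
        have h5 : ∑ i, cm i + ∑ i, d i ≤ ∑ i : Fin m, (p-1) := by
          rw [← Finset.sum_add_distrib]
          apply Finset.sum_le_sum
          intro i _
          rw [hcm_apply]
          have := hd i
          omega
        omega
      have heq : ∀ i, D i = p - 1 := by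
        by_contra hcon
        push_neg at hcon
        obtain ⟨i, hi⟩ := hcon
        have : p - 1 < D i := lt_of_le_of_ne (hlow i) (Ne.symm hi)
        have : ∑ j, D j > ∑ j : Fin m, (p-1) := by
          apply Finset.sum_lt_sum (fun j _ => hlow j) ⟨i, Finset.mem_univ i, this⟩
        omega
      ext j
      rw [heq j, hdfull_apply j]
  -- therefore the sum equals the single dfull term
  have hsingle : ∑ D ∈ G'.support, coeff D G' * ∏ i, (∑ x : ZMod p, x ^ D i)
      = coeff dfull G' * ∏ i : Fin m, (∑ x : ZMod p, x ^ (p - 1)) := by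
    rw [Finset.sum_eq_single dfull hzero]
    · congr 1
      apply Finset.prod_congr rfl
      intro i _
      rw [hdfull_apply i]
    · intro hns
      simp [MvPolynomial.notMem_support_iff.1 hns]
  rw [hsingle] at hsum
  -- coefficient of dfull in G' is coeff d G
  have hco : coeff dfull G' = coeff d G := by
    rw [hG', hdfull, add_comm d cm, MvPolynomial.coeff_monomial_mul, one_mul]
  rw [hco] at hsum
  rw [Finset.prod_congr rfl (fun (i : Fin m) _ => sum_pow_card_sub_one)] at hsum
  rw [Finset.prod_const] at hsum
  have : (-1 : ZMod p) ^ (Finset.univ : Finset (Fin m)).card ≠ 0 := by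
    apply pow_ne_zero
    intro h
    have : (1 : ZMod p) = 0 := by linear_combination -h
    simp at this
  exact hc (by
    rcases mul_eq_zero.1 hsum with h | h
    · exact h
    · exact absurd h this)

end PackingTranslates

namespace PackingTranslates

variable {σ : Type*} [DecidableEq σ]

lemma prod_offDiag {M : Type*} [CommMonoid M] (s : Finset σ) (f : σ × σ → M) :
    ∏ q ∈ s.offDiag, f q = ∏ i ∈ s, ∏ j ∈ s.erase i, f (i, j) := by
  rw [show s.offDiag = (s ×ˢ s).filter (fun a : σ × σ => a.1 ≠ a.2) from by
    ext q; simp [Finset.mem_offDiag, and_assoc], Finset.prod_filter, Finset.prod_product]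
  apply Finset.prod_congr rfl
  intro i _
  rw [← Finset.prod_filter]
  apply Finset.prod_congr
  · ext j
    simp only [Finset.mem_filter, Finset.mem_erase]
    constructor
    · rintro ⟨hj, hne⟩; exact ⟨fun h => hne (by simp [h]), hj⟩
    · rintro ⟨hne, hj⟩; exact ⟨hj, by simpa using fun h => hne h.symm⟩
  · intros; rfl

lemma sum_offDiag {M : Type*} [AddCommMonoid M] (s : Finset σ) (f : σ × σ → M) :
    ∑ q ∈ s.offDiag, f q = ∑ i ∈ s, ∑ j ∈ s.erase i, f (i, j) := by
  rw [show s.offDiag = (s ×ˢ s).filter (fun a : σ × σ => a.1 ≠ a.2) from by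
    ext q; simp [Finset.mem_offDiag, and_assoc], Finset.sum_filter, Finset.sum_product]
  apply Finset.sum_congr rfl
  intro i _
  rw [← Finset.sum_filter]
  apply Finset.sum_congr
  · ext j
    simp only [Finset.mem_filter, Finset.mem_erase]
    constructor
    · rintro ⟨hj, hne⟩; exact ⟨fun h => hne (by simp [h]), hj⟩
    · rintro ⟨hne, hj⟩; exact ⟨hj, by simpa using fun h => hne h.symm⟩
  · intros; rfl

end PackingTranslates

namespace Dyson

open PackingTranslates

variable {σ : Type*} [DecidableEq σ]

/-- The Dyson product. -/
noncomputable def Nform (s : Finset σ) (a : σ → ℕ) : MvPolynomial σ ℤ :=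
  ∏ q ∈ s.offDiag, (X q.2 - X q.1) ^ a q.1

/-- The target monomial. -/
noncomputable def Dmon (s : Finset σ) (a : σ → ℕ) : σ →₀ ℕ :=
  ∑ j ∈ s, Finsupp.single j ((∑ i ∈ s, a i) - a j)

lemma Dmon_apply (s : Finset σ) (a : σ → ℕ) (j : σ) :
    Dmon s a j = if j ∈ s then (∑ i ∈ s, a i) - a j else 0 := by
  rw [Dmon, Finsupp.finset_sum_apply]
  by_cases hj : j ∈ s
  · rw [Finset.sum_eq_single j (fun i _ hij => Finsupp.single_eq_of_ne' hij)
      (fun h => absurd hj h)]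
    simp [hj]
  · rw [if_neg hj]
    apply Finset.sum_eq_zero
    intro i hi
    exact Finsupp.single_eq_of_ne (fun h => hj (h ▸ hi))

lemma Nform_empty (a : σ → ℕ) : Nform (∅ : Finset σ) a = 1 := by
  simp [Nform]

lemma Nform_congr {s : Finset σ} {a b : σ → ℕ} (h : ∀ i ∈ s, a i = b i) :
    Nform s a = Nform s b := by
  apply Finset.prod_congr rfl
  intro q hq
  rw [h q.1 (Finset.mem_offDiag.1 hq).1]

lemma Nform_add (s : Finset σ) (a b : σ → ℕ) :
    Nform s (fun i => a i + b i) = Nform s a * Nform s b := by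
  rw [Nform, Nform, Nform, ← Finset.prod_mul_distrib]
  apply Finset.prod_congr rfl
  intro q _
  rw [pow_add]

/-- The Lagrange-type factor. -/
noncomputable def Pfac (s : Finset σ) (i : σ) : MvPolynomial σ ℤ :=
  ∏ j ∈ s.erase i, (X j - X i)

lemma Nform_indicator {s u : Finset σ} (hu : u ⊆ s) :
    Nform s (fun i => if i ∈ u then 1 else 0) = ∏ i ∈ u, Pfac s i := by
  rw [Nform, prod_offDiag]
  rw [← Finset.prod_subset hu
    (f := fun i => ∏ j ∈ s.erase i, (X (i, j).2 - X (i, j).1) ^ (if (i, j).1 ∈ u then 1 else 0))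
    (by
      intro i _ hiu
      apply Finset.prod_eq_one
      intro j _
      simp only [if_neg hiu, pow_zero])]
  apply Finset.prod_congr rfl
  intro i hi
  rw [Pfac]
  apply Finset.prod_congr rfl
  intro j _
  simp only [if_pos hi, pow_one]

end Dyson

namespace Dyson

variable {σ : Type*} [DecidableEq σ]

set_option maxHeartbeats 1000000 in
set_option synthInstance.maxHeartbeats 200000 in
theorem star2 (s : Finset σ) (hs : s.Nonempty) :
    ∏ i ∈ s, Pfac s i
      = ∑ k ∈ s, (∏ j ∈ s.erase k, X j) * ∏ i ∈ s.erase k, Pfac s i := by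
  classical
  set A := MvPolynomial σ ℤ
  letI : CommRing A := inferInstance
  set F := FractionRing A
  letI : Field F := inferInstance
  have hinj : Function.Injective (algebraMap A F) := IsFractionRing.injective A F
  apply hinj
  set φ := algebraMap A F with hφ
  set v : σ → F := fun i => φ (X i) with hv
  have hvinj : ∀ i j : σ, i ≠ j → v i ≠ v j := by
    intro i j hij h
    exact hij (MvPolynomial.X_injective (hinj h))
  have hInjOn : Set.InjOn v ↑s := by
    intro i _ j _ h
    by_contra hne
    exact hvinj i j hne h
  -- `Pfac` maps to products of differences of node values
  have hPfac : ∀ i : σ, φ (Pfac s i) = ∏ j ∈ s.erase i, (v j - v i) := by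
    intro i
    rw [Pfac, map_prod]
    apply Finset.prod_congr rfl
    intro j _
    rw [map_sub]
  -- Lagrange: sum of basis polynomials is 1 ; evaluate at 0
  have hbasis : (1 : F) = ∑ k ∈ s, ∏ j ∈ s.erase k, (-(v j) * (v k - v j)⁻¹) := by
    have h1 : ∑ j ∈ s, Lagrange.basis s v j = 1 := Lagrange.sum_basis hInjOn hs
    have h2 := congrArg (Polynomial.eval (0 : F)) h1
    rw [Polynomial.eval_finset_sum, Polynomial.eval_one] at h2
    rw [← h2]
    apply Finset.sum_congr rfl
    intro k _
    rw [Lagrange.basis, Polynomial.eval_prod]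
    apply Finset.prod_congr rfl
    intro j _
    rw [Lagrange.basisDivisor, Polynomial.eval_mul, Polynomial.eval_C, Polynomial.eval_sub,
      Polynomial.eval_X, Polynomial.eval_C]
    ring
  -- push the map through both sides
  rw [map_prod, map_sum]
  have hterm : ∀ k ∈ s,
      φ ((∏ j ∈ s.erase k, X j) * ∏ i ∈ s.erase k, Pfac s i)
        = (∏ i ∈ s, φ (Pfac s i)) * ∏ j ∈ s.erase k, (-(v j) * (v k - v j)⁻¹) := by
    intro k hk
    rw [map_mul, map_prod, map_prod]
    have hsplit : ∏ i ∈ s, φ (Pfac s i)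
        = φ (Pfac s k) * ∏ i ∈ s.erase k, φ (Pfac s i) :=
      (Finset.mul_prod_erase s _ hk).symm
    rw [hsplit]
    have hkey : φ (Pfac s k) * ∏ j ∈ s.erase k, (-(v j) * (v k - v j)⁻¹)
        = ∏ j ∈ s.erase k, φ (X j) := by
      rw [hPfac, ← Finset.prod_mul_distrib]
      apply Finset.prod_congr rfl
      intro j hj
      have hjk : j ≠ k := (Finset.mem_erase.1 hj).1
      have hne : v k - v j ≠ 0 := sub_ne_zero.2 (hvinj k j (Ne.symm hjk))
      field_simp
      ring
    rw [← hkey]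
    ring
  rw [Finset.sum_congr rfl hterm, ← Finset.mul_sum, ← hbasis, mul_one]

end Dyson

namespace Dyson

variable {σ : Type*} [DecidableEq σ]

lemma isHomogeneous_XsubX (k j : σ) : (X k - X j : MvPolynomial σ ℤ).IsHomogeneous 1 :=
  (isHomogeneous_X ℤ k).sub (isHomogeneous_X ℤ j)

lemma isHomogeneous_XsubX_pow (k j : σ) (n : ℕ) :
    ((X k - X j : MvPolynomial σ ℤ) ^ n).IsHomogeneous n := by
  have := (isHomogeneous_XsubX k j).pow n
  rwa [one_mul] at this

lemma single_eq_of_add_eq {D1 D2 : σ →₀ ℕ} {k : σ} {n : ℕ}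
    (h : D1 + D2 = Finsupp.single k n) : D1 = Finsupp.single k (D1 k) := by
  ext i
  by_cases hik : i = k
  · simp [hik]
  · have := congrArg (fun f => f i) h
    simp only [Finsupp.add_apply, Finsupp.single_apply] at this ⊢
    rw [if_neg (Ne.symm hik)] at this ⊢
    omega

lemma degree_single (k : σ) (n : ℕ) : (Finsupp.single k n).degree = n := by
  rcases eq_or_ne n 0 with h | h
  · subst h; simp [Finsupp.degree]
  · rw [Finsupp.degree_apply, Finsupp.support_single_ne_zero _ h, Finset.sum_singleton,
      Finsupp.single_eq_same]

/-- helper: coefficient at a pure power of `X k` of a product of homogeneous polys. -/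
lemma coeff_single_top_mul {P Q : MvPolynomial σ ℤ} {n₁ n₂ : ℕ} {k : σ}
    (hP : P.IsHomogeneous n₁) (hQ : Q.IsHomogeneous n₂) :
    coeff (Finsupp.single k (n₁ + n₂)) (P * Q)
      = coeff (Finsupp.single k n₁) P * coeff (Finsupp.single k n₂) Q := by
  rw [MvPolynomial.coeff_mul]
  rw [Finset.sum_eq_single_of_mem (Finsupp.single k n₁, Finsupp.single k n₂)]
  · rw [Finset.HasAntidiagonal.mem_antidiagonal, ← Finsupp.single_add]
  · rintro ⟨D1, D2⟩ hmem hne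
    rw [Finset.HasAntidiagonal.mem_antidiagonal] at hmem
    by_contra hprod
    have h1 : coeff D1 P ≠ 0 := fun h => hprod (by simp [h])
    have h2 : coeff D2 Q ≠ 0 := fun h => hprod (by simp [h])
    have hd1 : D1 = Finsupp.single k (D1 k) := single_eq_of_add_eq hmem
    have hd2 : D2 = Finsupp.single k (D2 k) := by
      rw [add_comm] at hmem
      exact single_eq_of_add_eq hmem
    have hs1 : D1.degree = n₁ := by
      by_contra h
      exact h1 (hP.coeff_eq_zero h)
    have hs2 : D2.degree = n₂ := by
      by_contra h
      exact h2 (hQ.coeff_eq_zero h)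
    rw [hd1, degree_single] at hs1
    rw [hd2, degree_single] at hs2
    apply hne
    rw [hd1, hd2, hs1, hs2]

lemma coeff_single_pow (k j : σ) (hjk : j ≠ k) (n : ℕ) :
    coeff (Finsupp.single k n) ((X k - X j : MvPolynomial σ ℤ) ^ n) = 1 := by
  induction n with
  | zero => simp
  | succ n ih =>
    rw [pow_succ]
    have := coeff_single_top_mul (k := k) (isHomogeneous_XsubX_pow k j n) (isHomogeneous_XsubX k j)
    rw [this, ih, one_mul, MvPolynomial.coeff_sub, MvPolynomial.coeff_X_same, coeff_X']
    rw [if_neg (by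
      intro h
      rcases (Finsupp.single_eq_single_iff _ _ _ _).1 h with ⟨h1, -⟩ | ⟨h1, -⟩
      · exact hjk h1
      · exact one_ne_zero h1)]
    ring

lemma coeff_pure_power (k : σ) (a : σ → ℕ) (t : Finset σ) (hk : k ∉ t) :
    coeff (Finsupp.single k (∑ j ∈ t, a j)) (∏ j ∈ t, (X k - X j : MvPolynomial σ ℤ) ^ a j)
      = 1 := by
  classical
  induction t using Finset.cons_induction with
  | empty => simp
  | cons j0 t hj0 ih =>
    have hkj0 : k ≠ j0 := fun h => hk (h ▸ Finset.mem_cons_self j0 t)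
    have hkt : k ∉ t := fun h => hk (Finset.mem_cons_of_mem h)
    rw [Finset.prod_cons, Finset.sum_cons]
    have hQ : (∏ j ∈ t, (X k - X j : MvPolynomial σ ℤ) ^ a j).IsHomogeneous (∑ j ∈ t, a j) :=
      MvPolynomial.IsHomogeneous.prod t _ _ (fun j _ => isHomogeneous_XsubX_pow k j (a j))
    rw [coeff_single_top_mul (isHomogeneous_XsubX_pow k j0 (a j0)) hQ]
    rw [coeff_single_pow k j0 (Ne.symm hkj0), ih hkt, one_mul]

end Dyson

namespace Dyson

variable {σ : Type*} [DecidableEq σ]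

/-- decrement `a` at `k`. -/
def asub (a : σ → ℕ) (k : σ) : σ → ℕ := fun i => if i = k then a i - 1 else a i

lemma sum_asub {s : Finset σ} {a : σ → ℕ} {k : σ} (hk : k ∈ s) (hak : 1 ≤ a k) :
    ∑ i ∈ s, asub a k i = (∑ i ∈ s, a i) - 1 := by
  have h1 : ∑ i ∈ s, a i = a k + ∑ i ∈ s.erase k, a i := (Finset.add_sum_erase s a hk).symm
  have h2 : ∑ i ∈ s, asub a k i = asub a k k + ∑ i ∈ s.erase k, asub a k i :=
    (Finset.add_sum_erase s _ hk).symm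
  have h3 : ∑ i ∈ s.erase k, asub a k i = ∑ i ∈ s.erase k, a i := by
    apply Finset.sum_congr rfl
    intro i hi
    rw [asub, if_neg (Finset.mem_erase.1 hi).1]
  rw [h2, h3, asub, if_pos rfl]
  omega

lemma Nform_recursion (s : Finset σ) (hs : s.Nonempty) (a : σ → ℕ)
    (hpos : ∀ i ∈ s, 1 ≤ a i) :
    Nform s a = ∑ k ∈ s, (∏ j ∈ s.erase k, X j) * Nform s (asub a k) := by
  set b : σ → ℕ := fun i => a i - 1 with hb
  have h1 : Nform s a = Nform s b * ∏ i ∈ s, Pfac s i := by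
    rw [← Nform_indicator (Finset.Subset.refl s), ← Nform_add]
    apply Nform_congr
    intro i hi
    have := hpos i hi
    simp only [hb, if_pos hi]
    omega
  have h2 : ∀ k ∈ s, Nform s (asub a k) = Nform s b * ∏ i ∈ s.erase k, Pfac s i := by
    intro k hk
    rw [← Nform_indicator (Finset.erase_subset k s), ← Nform_add]
    apply Nform_congr
    intro i hi
    show asub a k i = b i + (if i ∈ s.erase k then 1 else 0)
    by_cases hik : i = k
    · rw [asub, if_pos hik, if_neg (by
        rw [hik]
        exact fun h => (Finset.mem_erase.1 h).1 rfl)]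
      simp only [hb]
      omega
    · rw [asub, if_neg hik, if_pos (Finset.mem_erase.2 ⟨hik, hi⟩)]
      have := hpos i hi
      simp only [hb]
      omega
  rw [h1, star2 s hs, Finset.mul_sum]
  apply Finset.sum_congr rfl
  intro k hk
  rw [h2 k hk]
  ring

lemma prod_X_eq_monomial (t : Finset σ) :
    (∏ j ∈ t, (X j : MvPolynomial σ ℤ))
      = monomial (∑ j ∈ t, Finsupp.single j 1) 1 := by
  classical
  induction t using Finset.cons_induction with
  | empty => simp [MvPolynomial.monomial_zero']
  | cons j t hj ih =>
    rw [Finset.prod_cons, Finset.sum_cons, ih, MvPolynomial.X,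
      MvPolynomial.monomial_mul, one_mul]

lemma sum_single_one_apply (t : Finset σ) (i : σ) :
    (∑ j ∈ t, Finsupp.single j (1:ℕ)) i = if i ∈ t then 1 else 0 := by
  rw [Finsupp.finset_sum_apply]
  by_cases hi : i ∈ t
  · rw [Finset.sum_eq_single i (fun j _ hji => Finsupp.single_eq_of_ne' hji)
      (fun h => absurd hi h)]
    simp [hi]
  · rw [if_neg hi]
    apply Finset.sum_eq_zero
    intro j hj
    exact Finsupp.single_eq_of_ne (fun h => hi (h ▸ hj))

lemma Dmon_rec {s : Finset σ} {a : σ → ℕ} {k : σ} (hk : k ∈ s)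
    (hpos : ∀ i ∈ s, 1 ≤ a i) :
    Dmon s a = (∑ j ∈ s.erase k, Finsupp.single j 1) + Dmon s (asub a k) := by
  have hak : 1 ≤ a k := hpos k hk
  have hsum := sum_asub hk hak
  have hle : ∀ j ∈ s, a j ≤ ∑ i ∈ s, a i :=
    fun j hj => Finset.single_le_sum (fun i _ => Nat.zero_le (a i)) hj
  have hpair : ∀ j ∈ s, j ≠ k → a j + a k ≤ ∑ i ∈ s, a i := by
    intro j hj hjk
    have hsub : ({j, k} : Finset σ) ⊆ s := by
      intro x hx
      rcases Finset.mem_insert.1 hx with h | h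
      · exact h ▸ hj
      · exact (Finset.mem_singleton.1 h) ▸ hk
    have := Finset.sum_le_sum_of_subset (f := a) hsub
    rwa [Finset.sum_pair hjk] at this
  ext j
  rw [Finsupp.add_apply, Dmon_apply, Dmon_apply, sum_single_one_apply, hsum]
  by_cases hjs : j ∈ s
  · rw [if_pos hjs, if_pos hjs]
    by_cases hjk : j = k
    · subst hjk
      rw [if_neg (fun h => (Finset.mem_erase.1 h).1 rfl)]
      rw [asub, if_pos rfl]
      have := hle j hjs
      omega
    · rw [if_pos (Finset.mem_erase.2 ⟨hjk, hjs⟩), asub, if_neg hjk]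
      have := hpair j hjs hjk
      omega
  · rw [if_neg hjs, if_neg hjs, if_neg (fun h => hjs (Finset.mem_erase.1 h).2)]

end Dyson

namespace Dyson

variable {σ : Type*} [DecidableEq σ]

lemma Nform_erase {s : Finset σ} {a : σ → ℕ} {k : σ} (hk : k ∈ s) (hak : a k = 0) :
    Nform s a = Nform (s.erase k) a * ∏ j ∈ s.erase k, (X k - X j) ^ a j := by
  have hks' : k ∉ s.erase k := Finset.notMem_erase k s
  conv_lhs => rw [← Finset.insert_erase hk]
  rw [Nform, Finset.offDiag_insert (a := k) (s := s.erase k) hks']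
  have d2 : Disjoint ((s.erase k).offDiag) ({k} ×ˢ s.erase k) := by
    rw [Finset.disjoint_left]
    intro q hq hq'
    have h1 : q.1 ∈ s.erase k := (Finset.mem_offDiag.1 hq).1
    have h2 : q.1 = k := (Finset.mem_singleton.1 (Finset.mem_product.1 hq').1)
    exact hks' (h2 ▸ h1)
  have d1 : Disjoint ((s.erase k).offDiag ∪ {k} ×ˢ s.erase k) (s.erase k ×ˢ {k}) := by
    rw [Finset.disjoint_left]
    intro q hq hq'
    have h2 : q.2 = k := Finset.mem_singleton.1 (Finset.mem_product.1 hq').2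
    rcases Finset.mem_union.1 hq with h | h
    · exact hks' (h2 ▸ (Finset.mem_offDiag.1 h).2.1)
    · exact hks' (h2 ▸ (Finset.mem_product.1 h).2)
  rw [Finset.prod_union d1, Finset.prod_union d2]
  have hB : ∏ q ∈ {k} ×ˢ s.erase k, (X q.2 - X q.1 : MvPolynomial σ ℤ) ^ a q.1 = 1 := by
    rw [Finset.prod_product, Finset.prod_singleton]
    apply Finset.prod_eq_one
    intro j _
    rw [hak, pow_zero]
  have hC : ∏ q ∈ s.erase k ×ˢ {k}, (X q.2 - X q.1 : MvPolynomial σ ℤ) ^ a q.1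
      = ∏ j ∈ s.erase k, (X k - X j) ^ a j := by
    rw [Finset.prod_product]
    apply Finset.prod_congr rfl
    intro j _
    rw [Finset.prod_singleton]
  rw [hB, hC, mul_one]
  rfl

lemma not_mem_vars_Nform {s : Finset σ} {a : σ → ℕ} {k : σ} (hk : k ∉ s) :
    k ∉ (Nform s a).vars := by
  intro hmem
  have h := MvPolynomial.vars_prod (s := s.offDiag)
    (f := fun q => ((X q.2 - X q.1 : MvPolynomial σ ℤ)) ^ a q.1) hmem
  obtain ⟨q, hq, hk'⟩ := Finset.mem_biUnion.1 h
  have h1 := MvPolynomial.vars_pow _ _ hk'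
  have h2 := MvPolynomial.vars_sub_subset (X q.2) (q := X q.1) h1
  rcases Finset.mem_union.1 h2 with h | h
  · rw [MvPolynomial.vars_X] at h
    have := Finset.mem_singleton.1 h
    exact hk (this ▸ (Finset.mem_offDiag.1 hq).2.1)
  · rw [MvPolynomial.vars_X] at h
    have := Finset.mem_singleton.1 h
    exact hk (this ▸ (Finset.mem_offDiag.1 hq).1)

lemma Dmon_erase {s : Finset σ} {a : σ → ℕ} {k : σ} (hk : k ∈ s) (hak : a k = 0) :
    Dmon s a = Dmon (s.erase k) a + Finsupp.single k (∑ i ∈ s, a i) := by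
  have hA' : ∑ i ∈ s.erase k, a i = ∑ i ∈ s, a i := Finset.sum_erase s (by rw [hak])
  ext j
  rw [Finsupp.add_apply, Dmon_apply, Dmon_apply, hA', Finsupp.single_apply]
  by_cases hjk : j = k
  · subst hjk
    rw [if_pos hk, if_neg (Finset.notMem_erase j s), if_pos rfl, hak]
    omega
  · rw [if_neg (Ne.symm hjk)]
    by_cases hjs : j ∈ s
    · rw [if_pos hjs, if_pos (Finset.mem_erase.2 ⟨hjk, hjs⟩)]
      omega
    · rw [if_neg hjs, if_neg (fun h => hjs (Finset.mem_erase.1 h).2)]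
      omega

lemma eq_single_of_degree_eq {f : σ →₀ ℕ} {k : σ} {n : ℕ}
    (hdeg : f.degree = n) (hfk : f k = n) : f = Finsupp.single k n := by
  rw [Finsupp.degree_apply] at hdeg
  ext i
  rw [Finsupp.single_apply]
  by_cases hik : i = k
  · subst hik
    rw [if_pos rfl]
    exact hfk
  · rw [if_neg (fun h => hik h.symm)]
    by_contra h0
    have hi : i ∈ f.support := Finsupp.mem_support_iff.2 h0
    rcases eq_or_ne (f k) 0 with hk0 | hk0
    · have : f i ≤ ∑ j ∈ f.support, f j :=
        Finset.single_le_sum (fun j _ => Nat.zero_le _) hi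
      omega
    · have hks : k ∈ f.support := Finsupp.mem_support_iff.2 hk0
      have hsub : ({i, k} : Finset σ) ⊆ f.support := by
        intro x hx
        rcases Finset.mem_insert.1 hx with h | h
        · exact h ▸ hi
        · exact (Finset.mem_singleton.1 h) ▸ hks
      have hle := Finset.sum_le_sum_of_subset (f := f) hsub
      rw [Finset.sum_pair hik] at hle
      omega

end Dyson

namespace Dyson

variable {σ : Type*} [DecidableEq σ]

lemma coeff_elim {s : Finset σ} {a : σ → ℕ} {k : σ} (hk : k ∈ s) (hak : a k = 0) :
    coeff (Dmon s a) (Nform s a) = coeff (Dmon (s.erase k) a) (Nform (s.erase k) a) := by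
  have hA' : ∑ i ∈ s.erase k, a i = ∑ i ∈ s, a i := Finset.sum_erase s (by rw [hak])
  have hks : k ∉ s.erase k := Finset.notMem_erase k s
  set A := ∑ i ∈ s, a i with hA
  set Q : MvPolynomial σ ℤ := ∏ j ∈ s.erase k, (X k - X j) ^ a j with hQ
  have hQhom : Q.IsHomogeneous A := by
    rw [hQ, ← hA']
    exact MvPolynomial.IsHomogeneous.prod _ _ _ (fun j _ => isHomogeneous_XsubX_pow k j (a j))
  rw [Nform_erase hk hak, MvPolynomial.coeff_mul]
  rw [Finset.sum_eq_single_of_mem (Dmon (s.erase k) a, Finsupp.single k A)]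
  · have h1 : coeff (Finsupp.single k A) Q = 1 := by
      rw [hQ, ← hA']
      exact coeff_pure_power k a (s.erase k) hks
    rw [h1, mul_one]
  · rw [Finset.HasAntidiagonal.mem_antidiagonal, ← Dmon_erase hk hak]
  · rintro ⟨D1, D2⟩ hmem hne
    rw [Finset.HasAntidiagonal.mem_antidiagonal] at hmem
    by_contra hprod
    have h1 : coeff D1 (Nform (s.erase k) a) ≠ 0 := fun h => hprod (by simp [h])
    have h2 : coeff D2 Q ≠ 0 := fun h => hprod (by rw [← hQ]; simp [h])
    -- D1 does not involve k
    have hD1k : D1 k = 0 := by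
      by_contra h
      exact not_mem_vars_Nform hks (MvPolynomial.mem_vars k |>.2
        ⟨D1, MvPolynomial.mem_support_iff.2 h1, Finsupp.mem_support_iff.2 h⟩)
    have hDk : Dmon s a k = A := by
      rw [Dmon_apply, if_pos hk, hak, Nat.sub_zero]
    have hD2k : D2 k = A := by
      have := congrArg (fun f => f k) hmem
      simp only [Finsupp.add_apply] at this
      omega
    have hD2deg : D2.degree = A := by
      by_contra h
      exact h2 (hQhom.coeff_eq_zero h)
    have hD2 : D2 = Finsupp.single k A := eq_single_of_degree_eq hD2deg hD2k
    have hD1 : D1 = Dmon (s.erase k) a := by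
      have h3 : D1 + D2 = Dmon (s.erase k) a + Finsupp.single k A := by
        rw [hmem, Dmon_erase hk hak]
      rw [hD2] at h3
      exact add_right_cancel h3
    exact hne (by rw [hD1, hD2])

lemma coeff_recursion (s : Finset σ) (hs : s.Nonempty) (a : σ → ℕ)
    (hpos : ∀ i ∈ s, 1 ≤ a i) :
    coeff (Dmon s a) (Nform s a)
      = ∑ k ∈ s, coeff (Dmon s (asub a k)) (Nform s (asub a k)) := by
  rw [Nform_recursion s hs a hpos, MvPolynomial.coeff_sum]
  apply Finset.sum_congr rfl
  intro k hk
  rw [prod_X_eq_monomial, Dmon_rec hk hpos, MvPolynomial.coeff_monomial_mul, one_mul]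

/-- Dyson's identity (Good's induction), in the form avoiding rationals. -/
theorem dyson_main : ∀ (M : ℕ) (s : Finset σ) (a : σ → ℕ),
    (∑ i ∈ s, a i) + s.card ≤ M →
    coeff (Dmon s a) (Nform s a) * ∏ i ∈ s, ((a i).factorial : ℤ)
      = ((∑ i ∈ s, a i).factorial : ℤ) := by
  intro M
  induction M with
  | zero =>
    intro s a h
    have hs : s = ∅ := Finset.card_eq_zero.1 (by omega)
    subst hs
    simp [Nform_empty, Dmon]
  | succ M ih =>
    intro s a hM
    rcases Finset.eq_empty_or_nonempty s with hs | hs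
    · subst hs
      simp [Nform_empty, Dmon]
    by_cases hzero : ∃ k ∈ s, a k = 0
    · obtain ⟨k, hk, hak⟩ := hzero
      have hA' : ∑ i ∈ s.erase k, a i = ∑ i ∈ s, a i := Finset.sum_erase s (by rw [hak])
      have hprod : ∏ i ∈ s, ((a i).factorial : ℤ) = ∏ i ∈ s.erase k, ((a i).factorial : ℤ) := by
        refine (Finset.prod_erase s ?_).symm
        rw [hak]
        simp
      rw [coeff_elim hk hak, hprod, ← hA']
      apply ih
      have hc : s.card = s.card - 1 + 1 := by
        have := Finset.card_pos.2 hs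
        omega
      have hce : (s.erase k).card = s.card - 1 := by
        rw [Finset.card_erase_of_mem hk]
      rw [hce, hA']
      omega
    · push_neg at hzero
      have hpos : ∀ i ∈ s, 1 ≤ a i := fun i hi => Nat.one_le_iff_ne_zero.2 (hzero i hi)
      set A := ∑ i ∈ s, a i with hA
      have hApos : 1 ≤ A := by
        obtain ⟨i, hi⟩ := hs
        calc 1 ≤ a i := hpos i hi
        _ ≤ A := Finset.single_le_sum (fun j _ => Nat.zero_le _) hi
      rw [coeff_recursion s hs a hpos, Finset.sum_mul]
      have hterm : ∀ k ∈ s,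
          coeff (Dmon s (asub a k)) (Nform s (asub a k)) * ∏ i ∈ s, ((a i).factorial : ℤ)
            = ((A - 1).factorial : ℤ) * (a k : ℤ) := by
        intro k hk
        have hsub : ∑ i ∈ s, asub a k i = A - 1 := sum_asub hk (hpos k hk)
        have hfact : ∏ i ∈ s, ((a i).factorial : ℤ)
            = (∏ i ∈ s, ((asub a k i).factorial : ℤ)) * (a k : ℤ) := by
          rw [← Finset.prod_erase_mul s _ hk, ← Finset.prod_erase_mul s _ hk]
          have he : ∏ i ∈ s.erase k, ((a i).factorial : ℤ)
              = ∏ i ∈ s.erase k, ((asub a k i).factorial : ℤ) := by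
            apply Finset.prod_congr rfl
            intro i hi
            rw [asub, if_neg (Finset.mem_erase.1 hi).1]
          rw [he]
          have hk1 : 1 ≤ a k := hpos k hk
          have : (a k).factorial = (asub a k k).factorial * a k := by
            rw [asub, if_pos rfl]
            have h3 : a k = (a k - 1) + 1 := by omega
            conv_lhs => rw [h3]
            rw [Nat.factorial_succ, ← h3]
            ring
          rw [this]
          push_cast
          ring
        rw [hfact, ← mul_assoc, ih s (asub a k) (by rw [hsub]; omega), hsub]
      rw [Finset.sum_congr rfl hterm, ← Finset.mul_sum]
      have : ∑ k ∈ s, (a k : ℤ) = (A : ℤ) := by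
        rw [hA]
        push_cast
        rfl
      rw [this]
      have hAfac : (A).factorial = (A - 1).factorial * A := by
        have h3 : A = (A - 1) + 1 := by omega
        conv_lhs => rw [h3]
        rw [Nat.factorial_succ, ← h3]
        ring
      rw [hAfac]
      push_cast
      ring

theorem dyson (s : Finset σ) (a : σ → ℕ) :
    coeff (Dmon s a) (Nform s a) * ∏ i ∈ s, ((a i).factorial : ℤ)
      = ((∑ i ∈ s, a i).factorial : ℤ) :=
  dyson_main ((∑ i ∈ s, a i) + s.card) s a le_rfl

end Dyson

namespace Assemble

open Dyson PackingTranslates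

variable {m : ℕ}

/-- unordered pairs, as ordered pairs with increasing components -/
def PR (m : ℕ) : Finset (Fin m × Fin m) :=
  (Finset.univ.offDiag).filter (fun q => q.1 < q.2)

lemma mem_PR {q : Fin m × Fin m} : q ∈ PR m ↔ q.1 < q.2 := by
  simp only [PR, Finset.mem_filter, Finset.mem_offDiag, Finset.mem_univ, true_and]
  exact ⟨fun h => h.2, fun h => ⟨ne_of_lt h, h⟩⟩

lemma offDiag_eq_PR_union :
    (Finset.univ.offDiag : Finset (Fin m × Fin m)) = PR m ∪ (PR m).image Prod.swap := by
  ext q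
  simp only [Finset.mem_union, Finset.mem_offDiag, Finset.mem_univ, true_and,
    Finset.mem_image]
  constructor
  · intro h
    rcases lt_or_gt_of_ne h with hlt | hgt
    · exact Or.inl (mem_PR.2 hlt)
    · exact Or.inr ⟨q.swap, mem_PR.2 hgt, by simp⟩
  · rintro (h | ⟨r, hr, hrq⟩)
    · exact ne_of_lt (mem_PR.1 h)
    · have := mem_PR.1 hr
      rw [← hrq]
      exact ne_of_gt this

lemma disjoint_PR_swap :
    Disjoint (PR m) ((PR m).image Prod.swap) := by
  rw [Finset.disjoint_left]
  intro q hq hq'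
  obtain ⟨r, hr, hrq⟩ := Finset.mem_image.1 hq'
  have h1 := mem_PR.1 hq
  have h2 := mem_PR.1 hr
  rw [← hrq] at h1
  exact absurd h1 (asymm h2)

lemma prod_offDiag_PR {M : Type*} [CommMonoid M] (f : Fin m × Fin m → M) :
    ∏ q ∈ (Finset.univ.offDiag : Finset (Fin m × Fin m)), f q
      = ∏ q ∈ PR m, (f q * f q.swap) := by
  rw [offDiag_eq_PR_union, Finset.prod_union disjoint_PR_swap,
    Finset.prod_image (fun x _ y _ h => Prod.swap_injective h), Finset.prod_mul_distrib]

lemma sum_offDiag_PR {M : Type*} [AddCommMonoid M] (f : Fin m × Fin m → M) :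
    ∑ q ∈ (Finset.univ.offDiag : Finset (Fin m × Fin m)), f q
      = ∑ q ∈ PR m, (f q + f q.swap) := by
  rw [offDiag_eq_PR_union, Finset.sum_union disjoint_PR_swap,
    Finset.sum_image (fun x _ y _ h => Prod.swap_injective h), Finset.sum_add_distrib]

/-- The top form, over a commutative ring. -/
noncomputable def Tpoly (a : Fin m → ℕ) (R : Type*) [CommRing R] : MvPolynomial (Fin m) R :=
  ∏ q ∈ PR m, (MvPolynomial.X q.1 - MvPolynomial.X q.2) ^ (a q.1 + a q.2)

lemma Nform_eq_sign_Tpoly (a : Fin m → ℕ) :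
    Nform Finset.univ a
      = (-1 : MvPolynomial (Fin m) ℤ) ^ (∑ q ∈ PR m, a q.1) * Tpoly a ℤ := by
  rw [Nform, prod_offDiag_PR]
  have hq : ∀ q ∈ PR m,
      ((MvPolynomial.X q.2 - MvPolynomial.X q.1 : MvPolynomial (Fin m) ℤ) ^ a q.1)
        * ((MvPolynomial.X q.swap.2 - MvPolynomial.X q.swap.1) ^ a q.swap.1)
      = ((-1 : MvPolynomial (Fin m) ℤ) ^ a q.1)
        * (MvPolynomial.X q.1 - MvPolynomial.X q.2) ^ (a q.1 + a q.2) := by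
    intro q _
    have h1 : (MvPolynomial.X q.2 - MvPolynomial.X q.1 : MvPolynomial (Fin m) ℤ)
        = -(MvPolynomial.X q.1 - MvPolynomial.X q.2) := by ring
    rw [Prod.fst_swap, Prod.snd_swap, h1, neg_pow, pow_add]
    ring
  rw [Finset.prod_congr rfl hq, Finset.prod_mul_distrib, Finset.prod_pow_eq_pow_sum]
  rw [Tpoly]

end Assemble

namespace Assemble

open Dyson PackingTranslates

variable {m : ℕ} {p : ℕ} [Fact p.Prime]

lemma Tpoly_map (a : Fin m → ℕ) :
    MvPolynomial.map (Int.castRingHom (ZMod p)) (Tpoly a ℤ) = Tpoly a (ZMod p) := by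
  rw [Tpoly, Tpoly, map_prod]
  apply Finset.prod_congr rfl
  intro q _
  rw [map_pow, map_sub, MvPolynomial.map_X, MvPolynomial.map_X]

lemma coeff_Tpoly_ne_zero (a : Fin m → ℕ) (hA : (∑ i, a i) ≤ p - 1) :
    MvPolynomial.coeff (Dmon Finset.univ a) (Tpoly a (ZMod p)) ≠ 0 := by
  have hp2 : 2 ≤ p := (Fact.out : p.Prime).two_le
  set E := ∑ q ∈ PR m, a q.1 with hE
  set c : ℤ := MvPolynomial.coeff (Dmon Finset.univ a) (Tpoly a ℤ) with hc
  have hco : MvPolynomial.coeff (Dmon Finset.univ a) (Tpoly a (ZMod p)) = ((c : ℤ) : ZMod p) := by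
    rw [← Tpoly_map a, MvPolynomial.coeff_map]
    rfl
  rw [hco]
  intro h0
  have hdy := dyson (Finset.univ : Finset (Fin m)) a
  rw [Nform_eq_sign_Tpoly] at hdy
  have hC1 : (MvPolynomial.C (-1 : ℤ) : MvPolynomial (Fin m) ℤ) = -1 := by simp
  have hCE : ((-1 : MvPolynomial (Fin m) ℤ)) ^ E = MvPolynomial.C ((-1 : ℤ) ^ E) := by
    rw [map_pow, hC1]
  rw [hCE, MvPolynomial.coeff_C_mul] at hdy
  have hcast := congrArg (fun z : ℤ => (z : ZMod p)) hdy
  simp only [Int.cast_mul, Int.cast_pow, Int.cast_neg, Int.cast_one, Int.cast_natCast] at hcast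
  rw [← hc, h0] at hcast
  rw [mul_zero, zero_mul] at hcast
  have hpd : p ∣ (∑ i, a i).factorial := by
    rw [← ZMod.natCast_eq_zero_iff]
    exact hcast.symm
  have := ((Fact.out : p.Prime).dvd_factorial).1 hpd
  omega

/-- The collision polynomial. -/
noncomputable def Gpoly (S : Fin m → Finset (ZMod p)) (a : Fin m → ℕ) :
    MvPolynomial (Fin m) (ZMod p) :=
  ∏ q ∈ PR m,
    ((∏ z ∈ S q.1 ×ˢ S q.2,
      (MvPolynomial.X q.1 - MvPolynomial.X q.2 + MvPolynomial.C (z.1 - z.2)))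
      * (MvPolynomial.X q.1 - MvPolynomial.X q.2)
          ^ ((a q.1 + a q.2) - (S q.1).card * (S q.2).card))

lemma totalDegree_XsubX_le (i j : Fin m) :
    (MvPolynomial.X i - MvPolynomial.X j : MvPolynomial (Fin m) (ZMod p)).totalDegree ≤ 1 := by
  rw [sub_eq_add_neg]
  refine le_trans (MvPolynomial.totalDegree_add _ _) ?_
  rw [MvPolynomial.totalDegree_neg]
  simp [MvPolynomial.totalDegree_X]

lemma TApx_Gpoly (S : Fin m → Finset (ZMod p)) (a : Fin m → ℕ)
    (hpair : ∀ q : Fin m × Fin m, (S q.1).card * (S q.2).card ≤ a q.1 + a q.2) :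
    TApx (∑ q ∈ PR m, (a q.1 + a q.2)) (Gpoly S a) (Tpoly a (ZMod p)) := by
  rw [Gpoly, Tpoly]
  apply TApx.prod
  intro q _
  set L : MvPolynomial (Fin m) (ZMod p) := MvPolynomial.X q.1 - MvPolynomial.X q.2 with hL
  have hLdeg := totalDegree_XsubX_le (p := p) q.1 q.2
  set nq := (S q.1).card * (S q.2).card with hnq
  have h1 : TApx nq (∏ z ∈ S q.1 ×ˢ S q.2, (L + MvPolynomial.C (z.1 - z.2))) (L ^ nq) := by
    have h2 : L ^ nq = ∏ _z ∈ S q.1 ×ˢ S q.2, L := by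
      rw [Finset.prod_const, Finset.card_product, hnq]
    have h3 : nq = ∑ _z ∈ S q.1 ×ˢ S q.2, 1 := by
      rw [Finset.sum_const, Finset.card_product, hnq, smul_eq_mul, mul_one]
    rw [h2, h3]
    apply TApx.prod
    intro z _
    exact TApx.linC hLdeg _
  have h4 : TApx ((a q.1 + a q.2) - nq) (L ^ ((a q.1 + a q.2) - nq))
      (L ^ ((a q.1 + a q.2) - nq)) := by
    apply TApx.refl
    refine le_trans (MvPolynomial.totalDegree_pow _ _) ?_
    calc ((a q.1 + a q.2) - nq) * L.totalDegree ≤ ((a q.1 + a q.2) - nq) * 1 := by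
          exact Nat.mul_le_mul_left _ hLdeg
      _ = (a q.1 + a q.2) - nq := by ring
  have h5 := h1.mul h4
  rw [← pow_add] at h5
  have h6 : nq + ((a q.1 + a q.2) - nq) = a q.1 + a q.2 := by
    have := hpair q
    omega
  rwa [h6] at h5

end Assemble

namespace Assemble

open Dyson PackingTranslates

variable {m : ℕ} {p : ℕ} [Fact p.Prime]

lemma ceil_sq (k : ℕ) : ⌈((k : ℚ)) ^ 2 / 2⌉ = (((k ^ 2 + 1) / 2 : ℕ) : ℤ) := by
  set q : ℕ := (k ^ 2 + 1) / 2 with hq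
  have hq1 : k ^ 2 ≤ 2 * q := by omega
  have hq2 : 2 * q ≤ k ^ 2 + 1 := by omega
  rw [Int.ceil_eq_iff]
  have e1 : (((q : ℕ) : ℤ) : ℚ) = (q : ℚ) := by push_cast; ring
  constructor
  · rw [e1]
    have h2 : (2 : ℚ) * (q : ℚ) ≤ (k : ℚ) ^ 2 + 1 := by exact_mod_cast hq2
    linarith
  · rw [e1]
    have h3 : (k : ℚ) ^ 2 ≤ 2 * (q : ℚ) := by exact_mod_cast hq1
    linarith

lemma eval_Gpoly_zero (S : Fin m → Finset (ZMod p)) (a : Fin m → ℕ)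
    (t : Fin m → ZMod p) (i j : Fin m) (hlt : i < j) (u v : ZMod p)
    (hu : u ∈ S i) (hv : v ∈ S j) (hcol : u + t i = v + t j) :
    MvPolynomial.eval t (Gpoly S a) = 0 := by
  rw [Gpoly, map_prod]
  apply Finset.prod_eq_zero (mem_PR.2 hlt : ((i, j) : Fin m × Fin m) ∈ PR m)
  rw [map_mul]
  have h1 : MvPolynomial.eval t
      (∏ z ∈ S i ×ˢ S j, (MvPolynomial.X i - MvPolynomial.X j + MvPolynomial.C (z.1 - z.2)))
      = 0 := by
    rw [map_prod]
    apply Finset.prod_eq_zero (Finset.mem_product.2 ⟨hu, hv⟩ : ((u, v) : ZMod p × ZMod p) ∈ S i ×ˢ S j)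
    rw [map_add, map_sub, MvPolynomial.eval_X, MvPolynomial.eval_X, MvPolynomial.eval_C]
    linear_combination hcol
  rw [h1, zero_mul]

end Assemble

/-- Packing translates in `F_p` under the condition
`∑ ⌈|X_i|²/2⌉ < p`. -/
theorem packing_translates_Fp_squares (p : ℕ) (hp : p.Prime) (m : ℕ)
    (X : Fin m → Finset (ZMod p))
    (hX : (∑ i, ⌈(((X i).card : ℚ) ^ 2) / 2⌉) < (p : ℤ)) :
    ∃ t : Fin m → ZMod p,
      ∀ i j, i ≠ j →
        Disjoint ((X i).image (fun x => x + t i))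
          ((X j).image (fun x => x + t j)) := by
  haveI : Fact p.Prime := ⟨hp⟩
  classical
  set n : Fin m → ℕ := fun i => (X i).card with hn
  set a : Fin m → ℕ := fun i => (n i ^ 2 + 1) / 2 with ha
  set A : ℕ := ∑ i, a i with hA
  have hAp : A ≤ p - 1 := by
    have h2 : (∑ i, (a i : ℤ)) < p := by
      have hcongr : ∑ i, ⌈(((X i).card : ℚ)) ^ 2 / 2⌉ = ∑ i, (a i : ℤ) :=
        Finset.sum_congr rfl (fun i _ => Assemble.ceil_sq ((X i).card))
      rw [hcongr] at hX
      exact hX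
    have h3 : ((A : ℕ) : ℤ) < p := by
      rw [hA]
      push_cast
      exact h2
    have hp2 := hp.two_le
    omega
  have hpair : ∀ q : Fin m × Fin m, n q.1 * n q.2 ≤ a q.1 + a q.2 := by
    intro q
    show n q.1 * n q.2 ≤ (n q.1 ^ 2 + 1) / 2 + (n q.2 ^ 2 + 1) / 2
    have hz : 2 * ((n q.1 : ℤ) * (n q.2 : ℤ)) ≤ (n q.1 : ℤ) ^ 2 + (n q.2 : ℤ) ^ 2 := by
      nlinarith [sq_nonneg ((n q.1 : ℤ) - (n q.2 : ℤ))]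
    have hnat : 2 * (n q.1 * n q.2) ≤ n q.1 ^ 2 + n q.2 ^ 2 := by exact_mod_cast hz
    obtain ⟨u, hu⟩ : ∃ u, n q.1 ^ 2 = u := ⟨_, rfl⟩
    obtain ⟨v, hv⟩ : ∃ v, n q.2 ^ 2 = v := ⟨_, rfl⟩
    obtain ⟨w, hw⟩ : ∃ w, n q.1 * n q.2 = w := ⟨_, rfl⟩
    rw [hu, hv, hw] at hnat ⊢
    omega
  set d : Fin m →₀ ℕ := Dyson.Dmon Finset.univ a with hd
  have hd_apply : ∀ i, d i = A - a i := by
    intro i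
    rw [hd, Dyson.Dmon_apply, if_pos (Finset.mem_univ i), hA]
  have haA : ∀ i, a i ≤ A :=
    fun i => hA ▸ Finset.single_le_sum (fun j _ => Nat.zero_le _) (Finset.mem_univ i)
  -- degree bookkeeping
  have hsum1 : ∑ q ∈ Assemble.PR m, (a q.1 + a q.2) = (m - 1) * A := by
    have h0 : ∑ q ∈ (Finset.univ.offDiag : Finset (Fin m × Fin m)), a q.1
        = ∑ q ∈ Assemble.PR m, (a q.1 + a q.2) := by
      rw [Assemble.sum_offDiag_PR]
      rfl
    rw [← h0, PackingTranslates.sum_offDiag]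
    have h1 : ∀ i : Fin m, ∑ j ∈ Finset.univ.erase i, a (i, j).1 = (m - 1) * a i := by
      intro i
      show ∑ _j ∈ Finset.univ.erase i, a i = (m - 1) * a i
      rw [Finset.sum_const, Finset.card_erase_of_mem (Finset.mem_univ i), Finset.card_univ,
        Fintype.card_fin, smul_eq_mul]
    rw [Finset.sum_congr rfl (fun i _ => h1 i), ← Finset.mul_sum, ← hA]
  have hsum2 : ∑ i, d i = (m - 1) * A := by
    rw [Finset.sum_congr rfl (fun i _ => hd_apply i)]
    rw [Finset.sum_tsub_distrib _ (fun i _ => haA i)]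
    rw [Finset.sum_const, Finset.card_univ, Fintype.card_fin, smul_eq_mul, ← hA,
      ← Nat.sub_one_mul]
  have hdsum : (d.sum fun _ e => e) = ∑ i, d i := Finsupp.sum_fintype _ _ (fun _ => rfl)
  have htapx := Assemble.TApx_Gpoly X a (fun q => hpair q)
  have hco : MvPolynomial.coeff d (Assemble.Gpoly X a) ≠ 0 := by
    have hceq := htapx.coeff_eq (D := d) (by rw [hdsum, hsum2, ← hsum1])
    rw [hceq]
    exact Assemble.coeff_Tpoly_ne_zero a (by rw [← hA]; exact hAp)
  obtain ⟨t, ht⟩ := PackingTranslates.exists_eval_ne (Assemble.Gpoly X a) d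
    (fun i => by rw [hd_apply i]; have := haA i; omega)
    (by
      refine le_trans htapx.1 ?_
      rw [hsum1, hsum2])
    hco
  refine ⟨t, ?_⟩
  intro i j hij
  rw [Finset.disjoint_left]
  intro x hxi hxj
  obtain ⟨u, hu, hux⟩ := Finset.mem_image.1 hxi
  obtain ⟨v, hv, hvx⟩ := Finset.mem_image.1 hxj
  have hcol : u + t i = v + t j := by rw [hux, hvx]
  apply ht
  rcases lt_or_gt_of_ne hij with hlt | hgt
  · exact Assemble.eval_Gpoly_zero X a t i j hlt u v hu hv hcol
  · exact Assemble.eval_Gpoly_zero X a t j i hgt v u hv hu hcol.symm
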